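/- Let X be a Polish space and let E be an analytic equivalence relation on X. Then there exists a family (E_α)_{α<ω₁} of Borel subsets of X × X such that: (i) whenever α ≤ β < ω₁, E_β ⊆ E_α; (ii) the graph of E equals ⋂_{α<ω₁} E_α; and (iii) there is a club set C of ordinals below ω₁ such that for every α ∈ C, E_α is the graph of an equivalence relation on X. -/

import Mathlib

open MeasureTheory Set

/-- The first uncountable ordinal `ω₁`. -/
noncomputable def omega1 : Ordinal := (Cardinal.aleph 1).ord
namespace Burgess
universe u v
theorem omega1_isLimit : Order.IsSuccLimit (omega1.{u}) :=
  Cardinal.isSuccLimit_ord (Cardinal.aleph0_le_aleph 1)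
theorem succ_lt_omega1 {o : Ordinal.{u}} (h : o < omega1) : o + 1 < omega1 := by
  rw [Ordinal.add_one_eq_succ]; exact omega1_isLimit.succ_lt h
theorem card_le_aleph0_of_lt_omega1 {o : Ordinal.{u}} (h : o < omega1) :
    o.card ≤ Cardinal.aleph0 := by
  have h1 : o.card < Cardinal.aleph 1 := Cardinal.lt_ord.1 h
  have h2 : Cardinal.aleph 1 = Order.succ (Cardinal.aleph0) := by
    rw [← Cardinal.aleph_zero, ← Cardinal.aleph_succ]; norm_num
  rw [h2, Order.lt_succ_iff] at h1; exact h1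
theorem lt_omega1_of_card_le {o : Ordinal.{u}} (h : o.card ≤ Cardinal.aleph0) :
    o < omega1 := by
  rw [omega1, Cardinal.lt_ord]
  exact lt_of_le_of_lt h Cardinal.aleph0_lt_aleph_one
theorem countable_Iio_of_lt_omega1 {o : Ordinal.{u}} (h : o < omega1) :
    (Set.Iio o).Countable := by
  rw [Cardinal.countable_iff_lt_aleph_one, Ordinal.mk_Iio_ordinal]
  have h2 := Cardinal.lift_lt.{u, u+1}.2 (Cardinal.lt_ord.1 h)
  simpa [Cardinal.lift_aleph] using h2
theorem iSup_lt_omega1 {g : ℕ → Ordinal.{u}} (h : ∀ n, g n < omega1) :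
    (⨆ n, g n) < omega1 := by
  apply Ordinal.iSup_lt_ord_lift _ h
  rw [omega1, Cardinal.isRegular_aleph_one.cof_eq]
  simpa using Cardinal.aleph0_lt_aleph_one

section Dead
variable {Y : Type v}
def deadF (F : List ℕ → Set Y) : Ordinal.{u} → Set (Y × List ℕ) :=
  Ordinal.lt_wf.fix fun α IH =>
    {q | ∀ n : ℕ, q.1 ∉ F (q.2 ++ [n]) ∨ ∃ β, ∃ h : β < α, (q.1, q.2 ++ [n]) ∈ IH β h}
theorem deadF_eq (F : List ℕ → Set Y) (α : Ordinal.{u}) :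
    deadF F α = {q | ∀ n : ℕ,
      q.1 ∉ F (q.2 ++ [n]) ∨ ∃ β, ∃ _ : β < α, (q.1, q.2 ++ [n]) ∈ deadF F β} :=
  WellFounded.fix_eq _ _ _
variable [MeasurableSpace Y]
theorem measurableSet_deadF {F : List ℕ → Set Y} (hF : ∀ s, MeasurableSet (F s)) :
    ∀ α : Ordinal.{u}, α < omega1 → ∀ s : List ℕ,
      MeasurableSet {y : Y | (y, s) ∈ deadF F α} := by
  intro α
  induction α using Ordinal.induction with
  | h α IH =>
    intro hα s
    have hc : (Set.Iio α).Countable := countable_Iio_of_lt_omega1 hα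
    have := hc.to_subtype
    have heq : {y : Y | (y, s) ∈ deadF F α}
        = ⋂ n : ℕ, ((F (s ++ [n]))ᶜ ∪
            ⋃ β : Set.Iio α, {y : Y | (y, s ++ [n]) ∈ deadF F β.1}) := by
      ext y
      rw [mem_setOf_eq, deadF_eq]
      simp only [mem_setOf_eq, mem_iInter, mem_union, mem_compl_iff, mem_iUnion,
        Subtype.exists, mem_Iio, exists_prop]
    rw [heq]
    exact MeasurableSet.iInter fun n =>
      ((hF _).compl.union (MeasurableSet.iUnion fun β => IH β.1 β.2 (β.2.trans hα) _))
end Dead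

section Rep
def cylL (s : List ℕ) : Set (ℕ → ℕ) := {z | (List.range s.length).map z = s}
def pre (x : ℕ → ℕ) (n : ℕ) : List ℕ := (List.range n).map x
theorem pre_succ (x : ℕ → ℕ) (n : ℕ) : pre x (n + 1) = pre x n ++ [x n] := by
  simp [pre, List.range_succ]
theorem cylL_pre (x : ℕ → ℕ) (n : ℕ) : cylL (pre x n) = PiNat.cylinder x n := by
  ext z
  simp only [cylL, pre, mem_setOf_eq, List.length_map, List.length_range]
  rw [List.map_inj_left]
  constructor
  · intro h i hi; exact h i (List.mem_range.2 hi)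
  · intro h i hi; exact h i (List.mem_range.1 hi)
theorem mem_range_of_branch {Y : Type v} [MetricSpace Y] {f : (ℕ → ℕ) → Y}
    (hf : Continuous f) {y : Y} {x : ℕ → ℕ}
    (hy : ∀ n, y ∈ closure (f '' PiNat.cylinder x (n + 1))) : y = f x := by
  apply eq_of_forall_dist_le
  intro ε hε
  obtain ⟨n, hn⟩ : ∃ n, f '' PiNat.cylinder x n ⊆ Metric.ball (f x) ε := by
    have hxm : x ∈ f ⁻¹' Metric.ball (f x) ε := by simp [hε]
    have hop : IsOpen (f ⁻¹' Metric.ball (f x) ε) := Metric.isOpen_ball.preimage hf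
    obtain ⟨vv, ⟨x', n, rfl⟩, hxv, hvs⟩ :=
      (PiNat.isTopologicalBasis_cylinders
        (fun _ : ℕ => ℕ)).exists_subset_of_mem_open hxm hop
    refine ⟨n, ?_⟩
    have hsub : PiNat.cylinder x n ⊆ PiNat.cylinder x' n := by
      intro z hz i hi; rw [hz i hi]; exact hxv i hi
    exact image_subset_iff.2 (hsub.trans hvs)
  have h2 : PiNat.cylinder x (n + 1) ⊆ PiNat.cylinder x n :=
    PiNat.cylinder_anti x (Nat.le_succ n)
  have h3 : y ∈ closure (Metric.ball (f x) ε) :=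
    closure_mono ((image_mono h2).trans hn) (hy n)
  exact Metric.mem_closedBall.1 (Metric.closure_ball_subset_closedBall h3)
variable {P : List ℕ → Prop}
noncomputable def chain (h0 : P []) (step : ∀ s, P s → {n : ℕ // P (s ++ [n])}) :
    ℕ → {s : List ℕ // P s}
  | 0 => ⟨[], h0⟩
  | (k + 1) =>
    let c := chain h0 step k
    ⟨c.1 ++ [(step c.1 c.2).1], (step c.1 c.2).2⟩
noncomputable def branchX (h0 : P []) (step : ∀ s, P s → {n : ℕ // P (s ++ [n])})
    (k : ℕ) : ℕ := (step (chain h0 step k).1 (chain h0 step k).2).1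
theorem chain_eq_pre (h0 : P []) (step : ∀ s, P s → {n : ℕ // P (s ++ [n])}) :
    ∀ n, (chain h0 step n).1 = pre (branchX h0 step) n
  | 0 => rfl
  | (n + 1) => by
      rw [pre_succ, ← chain_eq_pre h0 step n]; rfl
end Rep

/-- Every analytic set in a Polish space is the intersection of `ω₁` Borel sets. -/
theorem decomposition {Y : Type v} [TopologicalSpace Y] [PolishSpace Y]
    [MeasurableSpace Y] [BorelSpace Y] {A : Set Y} (hA : AnalyticSet A) :
    ∃ K : Ordinal.{u} → Set Y, (∀ β < omega1, MeasurableSet (K β)) ∧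
      (∀ β, A ⊆ K β) ∧ (∀ y : Y, (∀ β < omega1, y ∈ K β) → y ∈ A) := by
  rw [AnalyticSet] at hA
  rcases hA with rfl | ⟨f, hf, rfl⟩
  · exact ⟨fun _ => ∅, fun β _ => MeasurableSet.empty, fun β => Subset.rfl,
      fun y hy => hy 0 omega1_isLimit.pos⟩
  letI := TopologicalSpace.upgradeIsCompletelyMetrizable Y
  set F : List ℕ → Set Y := fun s => closure (f '' cylL s) with hFdef
  have hFmeas : ∀ s, MeasurableSet (F s) := fun s => isClosed_closure.measurableSet
  refine ⟨fun β => {y | (y, ([] : List ℕ)) ∉ deadF F β}, ?_, ?_, ?_⟩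
  · intro β hβ
    have h1 := (measurableSet_deadF hFmeas β hβ []).compl
    exact h1
  · rintro β y ⟨x, rfl⟩
    have key : ∀ α : Ordinal.{u}, ∀ n : ℕ, (f x, pre x n) ∉ deadF F α := by
      intro α
      induction α using Ordinal.induction with
      | h α IH =>
        intro n hmem
        rw [deadF_eq] at hmem
        rcases hmem (x n) with h1 | ⟨β', hβ', hd⟩
        · apply h1
          rw [← pre_succ]
          exact subset_closure ⟨x, by
            rw [cylL_pre]; exact PiNat.self_mem_cylinder _ _, rfl⟩
        · exact IH β' hβ' (n + 1) (by rwa [← pre_succ] at hd)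
    have h0 : pre x 0 = [] := rfl
    simpa [h0] using key β 0
  · intro y hy
    classical
    set Q : List ℕ → Prop :=
      fun s => (∀ β < omega1.{u}, (y, s) ∉ deadF F β) ∧ (s = [] ∨ y ∈ F s) with hQ
    have hQ0 : Q [] := ⟨fun β hβ => hy β hβ, Or.inl rfl⟩
    have hstep : ∀ s, Q s → ∃ n : ℕ, Q (s ++ [n]) := by
      intro s hs
      by_contra hcon
      push_neg at hcon
      have hcon' : ∀ n : ℕ, y ∈ F (s ++ [n]) →
          ∃ β < omega1.{u}, (y, s ++ [n]) ∈ deadF F β := by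
        intro n hyF
        by_contra h2
        push_neg at h2
        exact hcon n ⟨h2, Or.inr hyF⟩
      set g : ℕ → Ordinal.{u} :=
        fun n => if h : y ∈ F (s ++ [n]) then (hcon' n h).choose else 0 with hg
      have hglt : ∀ n, g n < omega1 := by
        intro n
        rw [hg]
        dsimp only
        split
        · exact (hcon' n ‹_›).choose_spec.1
        · exact omega1_isLimit.pos
      have hα : (⨆ n, g n) + 1 < omega1 := succ_lt_omega1 (iSup_lt_omega1 hglt)
      apply hs.1 _ hα
      rw [deadF_eq]
      intro n
      by_cases hyF : y ∈ F (s ++ [n])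
      · refine Or.inr ⟨g n, ?_, ?_⟩
        · refine lt_of_le_of_lt (le_ciSup (Ordinal.bddAbove_range _) n) ?_
          rw [Ordinal.add_one_eq_succ]; exact Order.lt_succ _
        · rw [hg]; dsimp only; rw [dif_pos hyF]
          exact (hcon' n hyF).choose_spec.2
      · exact Or.inl hyF
    have hstep' : ∀ s, Q s → {n : ℕ // Q (s ++ [n])} :=
      fun s hs => ⟨(hstep s hs).choose, (hstep s hs).choose_spec⟩
    set x := branchX hQ0 hstep' with hx
    have hmem : ∀ n, y ∈ F (pre x (n + 1)) := by
      intro n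
      have h1 := (chain hQ0 hstep' (n + 1)).2
      rcases h1.2 with h2 | h2
      · exfalso
        rw [chain_eq_pre hQ0 hstep' (n + 1), ← hx, pre_succ] at h2
        simp at h2
      · rwa [chain_eq_pre hQ0 hstep' (n + 1), ← hx] at h2
    have hyfx : y = f x :=
      mem_range_of_branch hf (fun n => by rw [← cylL_pre]; exact hmem n)
    exact ⟨x, hyfx.symm⟩

theorem analyticSet_inter {α : Type u} [TopologicalSpace α] [T2Space α]
    {s t : Set α} (hs : AnalyticSet s) (ht : AnalyticSet t) : AnalyticSet (s ∩ t) := by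
  rw [Set.inter_eq_iInter]
  exact AnalyticSet.iInter (fun b => by cases b <;> simpa)

variable {X : Type u} [TopologicalSpace X] [PolishSpace X]
    [MeasurableSpace X] [BorelSpace X]

theorem step_exists {A : Set (X × X)} (hA : AnalyticSet A)
    (hsym : ∀ p : X × X, p ∈ A → (p.2, p.1) ∈ A)
    (htrans : ∀ x y z : X, (x, y) ∈ A → (y, z) ∈ A → (x, z) ∈ A)
    (P : Set (X × X)) :
    ∃ H : Set (X × X), A ⊆ H ∧ (∀ p : X × X, p ∈ H → (p.2, p.1) ∈ H) ∧
      (A ⊆ P → MeasurableSet P → (MeasurableSet H ∧ H ⊆ P ∧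
        ∀ x y z : X, (x, y) ∈ H → (y, z) ∈ H → (x, z) ∈ P)) := by
  classical
  by_cases hc : A ⊆ P ∧ MeasurableSet P
  case neg =>
    exact ⟨A, Subset.rfl, hsym, fun h1 h2 => absurd ⟨h1, h2⟩ hc⟩
  obtain ⟨hAP, hPm⟩ := hc
  -- first separation
  set K₁ : Set (X × X) := {q | ∃ x, (x, q.1) ∈ A ∧ (x, q.2) ∉ P} with hK₁
  have hK₁an : AnalyticSet K₁ := by
    have h1 : AnalyticSet {w : (X × X) × X | w.1 ∈ A} :=
      hA.preimage continuous_fst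
    have h2 : MeasurableSet {w : (X × X) × X | (w.1.1, w.2) ∈ Pᶜ} :=
      hPm.compl.preimage ((measurable_fst.fst).prodMk measurable_snd)
    have h3 : AnalyticSet ({w : (X × X) × X | w.1 ∈ A} ∩ {w | (w.1.1, w.2) ∈ Pᶜ}) :=
      analyticSet_inter h1 h2.analyticSet
    have h4 : K₁ = (fun w : (X × X) × X => (w.1.2, w.2)) ''
        ({w : (X × X) × X | w.1 ∈ A} ∩ {w | (w.1.1, w.2) ∈ Pᶜ}) := by
      ext q
      constructor
      · rintro ⟨x, hx1, hx2⟩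
        exact ⟨((x, q.1), q.2), ⟨hx1, hx2⟩, rfl⟩
      · rintro ⟨w, ⟨hw1, hw2⟩, rfl⟩
        exact ⟨w.1.1, hw1, hw2⟩
    rw [h4]
    exact h3.image_of_continuous ((continuous_fst.snd).prodMk continuous_snd)
  have hdisj1 : Disjoint A K₁ := by
    rw [Set.disjoint_left]
    rintro p hpA ⟨x, hx1, hx2⟩
    exact hx2 (hAP (htrans x p.1 p.2 hx1 hpA))
  obtain ⟨u1, hAu1, hd1, hu1m⟩ := hA.measurablySeparable hK₁an hdisj1
  set H₁ : Set (X × X) := u1 ∩ P with hH₁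
  have hH₁m : MeasurableSet H₁ := hu1m.inter hPm
  have prop1 : ∀ x y z : X, (x, y) ∈ A → (y, z) ∈ H₁ → (x, z) ∈ P := by
    intro x y z hxy hyz
    by_contra hxz
    exact Set.disjoint_left.1 hd1 (⟨x, hxy, hxz⟩ : (y, z) ∈ K₁) hyz.1
  -- second separation
  set K₂ : Set (X × X) := {q | ∃ z, (q.2, z) ∈ H₁ ∧ (q.1, z) ∉ P} with hK₂
  have hK₂an : AnalyticSet K₂ := by
    have hS : MeasurableSet {w : (X × X) × X | (w.1.2, w.2) ∈ H₁ ∧ (w.1.1, w.2) ∉ P} := by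
      apply MeasurableSet.inter
      · exact hH₁m.preimage ((measurable_fst.snd).prodMk measurable_snd)
      · exact (hPm.compl.preimage ((measurable_fst.fst).prodMk measurable_snd))
    have h4 : K₂ = (fun w : (X × X) × X => w.1) ''
        {w : (X × X) × X | (w.1.2, w.2) ∈ H₁ ∧ (w.1.1, w.2) ∉ P} := by
      ext q
      constructor
      · rintro ⟨z, hz1, hz2⟩
        exact ⟨(q, z), ⟨hz1, hz2⟩, rfl⟩
      · rintro ⟨w, ⟨hw1, hw2⟩, rfl⟩
        exact ⟨w.2, hw1, hw2⟩
    rw [h4]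
    exact hS.analyticSet_image measurable_fst
  have hdisj2 : Disjoint A K₂ := by
    rw [Set.disjoint_left]
    rintro p hpA ⟨z, hz1, hz2⟩
    exact hz2 (prop1 p.1 p.2 z hpA hz1)
  obtain ⟨u2, hAu2, hd2, hu2m⟩ := hA.measurablySeparable hK₂an hdisj2
  set H₂ : Set (X × X) := u2 ∩ H₁ with hH₂
  have hH₂m : MeasurableSet H₂ := hu2m.inter hH₁m
  have comp2 : ∀ x y z : X, (x, y) ∈ H₂ → (y, z) ∈ H₂ → (x, z) ∈ P := by
    intro x y z h1 h2
    by_contra h3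
    exact Set.disjoint_left.1 hd2 (⟨z, h2.2, h3⟩ : (x, y) ∈ K₂) h1.1
  refine ⟨H₂ ∩ Prod.swap ⁻¹' H₂, ?_, ?_, fun _ _ => ⟨?_, ?_, ?_⟩⟩
  · intro p hp
    exact ⟨⟨hAu2 hp, hAu1 hp, hAP hp⟩,
      ⟨hAu2 (hsym p hp), hAu1 (hsym p hp), hAP (hsym p hp)⟩⟩
  · rintro ⟨a, b⟩ ⟨h1, h2⟩
    exact ⟨h2, h1⟩
  · exact hH₂m.inter (hH₂m.preimage measurable_swap)
  · intro p hp
    exact hp.1.2.2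
  · intro x y z h1 h2
    exact comp2 x y z h1.1 h2.1

end Burgess

/-- Burgess's theorem: an analytic equivalence relation on a Polish space is the
intersection of a decreasing `ω₁`-sequence of Borel sets which are equivalence
relations on a club of indices. -/
theorem analytic_equivalence_decreasing_borel_approximations
    {X : Type*} [TopologicalSpace X] [PolishSpace X]
    [MeasurableSpace X] [BorelSpace X]
    (E : X → X → Prop) (hE : Equivalence E)
    (hEan : AnalyticSet {p : X × X | E p.1 p.2}) :
    ∃ Eseq : Ordinal → Set (X × X),
      (∀ α < omega1, MeasurableSet (Eseq α)) ∧
      (∀ α β : Ordinal, α ≤ β → β < omega1 → Eseq β ⊆ Eseq α) ∧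
      ({p : X × X | E p.1 p.2} = ⋂ α ∈ Iio omega1, Eseq α) ∧
      ∃ C : Set Ordinal, C ⊆ Iio omega1 ∧
        (∀ α < omega1, ∃ β ∈ C, α ≤ β) ∧
        (∀ S : Set Ordinal, S ⊆ C → S.Nonempty →
          (∃ β < omega1, ∀ s ∈ S, s ≤ β) → sSup S ∈ C) ∧
        (∀ α ∈ C, Equivalence (fun x y : X => (x, y) ∈ Eseq α)) := by
  classical
  set A : Set (X × X) := {p : X × X | E p.1 p.2} with hAdef
  have hsym : ∀ p : X × X, p ∈ A → (p.2, p.1) ∈ A := fun p hp => hE.symm hp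
  have htrans : ∀ x y z : X, (x, y) ∈ A → (y, z) ∈ A → (x, z) ∈ A :=
    fun x y z h1 h2 => hE.trans h1 h2
  have hrefl : ∀ x : X, (x, x) ∈ A := fun x => hE.refl x
  obtain ⟨K, hKmeas, hKsub, hKint⟩ := Burgess.decomposition (Y := X × X) hEan
  choose Hf hHf1 hHf2 hHf3 using Burgess.step_exists hEan hsym htrans
  obtain ⟨G, hGeq⟩ : ∃ G : Ordinal → Set (X × X), ∀ α, G α =
      if ∃ γ : Ordinal, α = γ + 1 then
        Hf ((⋂ β : Iio α, K β.1) ∩ ⋂ β : Iio α, G β.1)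
      else ⋂ β : Iio α, G β.1 :=
    ⟨Ordinal.lt_wf.fix (C := fun _ => Set (X × X)) (fun α IH =>
      if ∃ γ : Ordinal, α = γ + 1 then
        Hf ((⋂ β : Iio α, K β.1) ∩ ⋂ β : Iio α, IH β.1 β.2)
      else ⋂ β : Iio α, IH β.1 β.2),
     fun α => WellFounded.fix_eq _ _ _⟩
  have hGsub : ∀ α, A ⊆ G α := by
    intro α
    induction α using Ordinal.induction with
    | h α IH =>
      rw [hGeq]
      split_ifs
      · exact hHf1 _
      · exact subset_iInter fun β => IH β.1 β.2
  have hGsym : ∀ α, ∀ p : X × X, p ∈ G α → (p.2, p.1) ∈ G α := by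
    intro α
    induction α using Ordinal.induction with
    | h α IH =>
      intro p hp
      rw [hGeq] at hp ⊢
      split_ifs at hp ⊢
      · exact hHf2 _ p hp
      · exact mem_iInter.2 fun β => IH β.1 β.2 p (mem_iInter.1 hp β)
  have hPrevSub : ∀ α, A ⊆ (⋂ β : Iio α, K β.1) ∩ ⋂ β : Iio α, G β.1 :=
    fun α => subset_inter (subset_iInter fun β => hKsub β.1)
      (subset_iInter fun β => hGsub β.1)
  have hGmeas : ∀ α, α < omega1 → MeasurableSet (G α) := by
    intro α
    induction α using Ordinal.induction with
    | h α IH =>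
      intro hα
      have hcnt := (Burgess.countable_Iio_of_lt_omega1 hα).to_subtype
      have hmi : MeasurableSet (⋂ β : Iio α, G β.1) :=
        MeasurableSet.iInter fun β : Iio α => IH β.1 β.2 (β.2.trans hα)
      rw [hGeq]
      split_ifs
      · have hPm : MeasurableSet ((⋂ β : Iio α, K β.1) ∩ ⋂ β : Iio α, G β.1) :=
          (MeasurableSet.iInter fun β : Iio α => hKmeas β.1 (β.2.trans hα)).inter hmi
        exact (hHf3 _ (hPrevSub α) hPm).1
      · exact hmi
  have hGsucc : ∀ β : Ordinal, β + 1 < omega1 →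
      (G (β + 1) ⊆ (⋂ γ : Iio (β + 1), K γ.1) ∩ ⋂ γ : Iio (β + 1), G γ.1) ∧
      (∀ x y z : X, (x, y) ∈ G (β + 1) → (y, z) ∈ G (β + 1) →
        (x, z) ∈ (⋂ γ : Iio (β + 1), K γ.1) ∩ ⋂ γ : Iio (β + 1), G γ.1) := by
    intro β hβ
    have hcnt := (Burgess.countable_Iio_of_lt_omega1 hβ).to_subtype
    have hPm : MeasurableSet ((⋂ γ : Iio (β + 1), K γ.1) ∩ ⋂ γ : Iio (β + 1), G γ.1) :=
      (MeasurableSet.iInter fun γ : Iio (β+1) => hKmeas γ.1 (γ.2.trans hβ)).inter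
        (MeasurableSet.iInter fun γ : Iio (β+1) => hGmeas γ.1 (γ.2.trans hβ))
    have h := hHf3 _ (hPrevSub (β + 1)) hPm
    have heq : G (β + 1) = Hf ((⋂ γ : Iio (β + 1), K γ.1) ∩ ⋂ γ : Iio (β + 1), G γ.1) := by
      rw [hGeq (β + 1), if_pos ⟨β, rfl⟩]
    constructor
    · rw [heq]; exact h.2.1
    · intro x y z hxy hyz
      rw [heq] at hxy hyz
      exact h.2.2 x y z hxy hyz
  have hself_succ : ∀ β : Ordinal, β < β + 1 := by
    intro β; rw [Ordinal.add_one_eq_succ]; exact Order.lt_succ β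
  have hGanti : ∀ β, β < omega1 → ∀ α, α ≤ β → G β ⊆ G α := by
    intro β hβ α hle
    rcases eq_or_lt_of_le hle with rfl | hlt
    · exact Subset.rfl
    · by_cases h : ∃ γ : Ordinal, β = γ + 1
      · obtain ⟨γ, rfl⟩ := h
        intro p hp
        exact mem_iInter.1 ((hGsucc γ hβ).1 hp).2 ⟨α, hlt⟩
      · rw [hGeq β, if_neg h]
        intro p hp
        exact mem_iInter.1 hp ⟨α, hlt⟩
  have hInt : A = ⋂ α ∈ Iio omega1, G α := by
    apply Subset.antisymm
    · exact subset_iInter₂ fun α _ => hGsub α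
    · intro p hp
      apply hKint p
      intro β hβ
      have hβ1 : β + 1 < omega1 := Burgess.succ_lt_omega1 hβ
      have hp1 : p ∈ G (β + 1) := mem_iInter₂.1 hp (β + 1) hβ1
      exact mem_iInter.1 ((hGsucc β hβ1).1 hp1).1 ⟨β, hself_succ β⟩
  refine ⟨G, fun α hα => hGmeas α hα, fun α β hle hβ => hGanti β hβ α hle, hInt,
    {α : Ordinal | α < omega1 ∧ Order.IsSuccLimit α}, fun α hα => hα.1, ?_, ?_, ?_⟩
  · -- unbounded
    intro α hα
    refine ⟨α + Ordinal.omega0, ⟨?_, Ordinal.isSuccLimit_add α Ordinal.isSuccLimit_omega0⟩,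
      le_self_add⟩
    apply Burgess.lt_omega1_of_card_le
    rw [Ordinal.card_add, Ordinal.card_omega0]
    calc α.card + Cardinal.aleph0 ≤ Cardinal.aleph0 + Cardinal.aleph0 :=
          add_le_add (Burgess.card_le_aleph0_of_lt_omega1 hα) le_rfl
      _ = Cardinal.aleph0 := Cardinal.aleph0_add_aleph0
  · -- closed
    intro S hSC hSne hSbdd
    obtain ⟨β, hβ, hbound⟩ := hSbdd
    have hbdd : BddAbove S := ⟨β, fun s hs => hbound s hs⟩
    have h1 : sSup S < omega1 := lt_of_le_of_lt (csSup_le hSne hbound) hβ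
    refine ⟨h1, ?_⟩
    rw [Order.isSuccLimit_iff_of_orderBot, Order.isSuccPrelimit_iff_succ_lt]
    refine ⟨?_, ?_⟩
    · obtain ⟨s₀, hs₀⟩ := hSne
      exact ((hSC hs₀).2.pos.trans_le (le_csSup hbdd hs₀)).ne'
    · intro a ha
      obtain ⟨s, hsS, has⟩ := exists_lt_of_lt_csSup hSne ha
      exact lt_of_lt_of_le ((hSC hsS).2.succ_lt has) (le_csSup hbdd hsS)
  · -- equivalence on limits
    rintro α ⟨hα, hlim⟩
    have hnotsucc : ¬ ∃ γ : Ordinal, α = γ + 1 := by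
      rintro ⟨γ, rfl⟩
      rw [Ordinal.add_one_eq_succ] at hlim
      exact Order.not_isSuccLimit_succ γ hlim
    have hGα : G α = ⋂ β : Iio α, G β.1 := by rw [hGeq α, if_neg hnotsucc]
    constructor
    · intro x
      exact hGsub α (hrefl x)
    · intro x y h
      exact hGsym α (x, y) h
    · intro x y z h1 h2
      have hxz : ∀ β : Ordinal, β < α → (x, z) ∈ G β := by
        intro β hβα
        have hβ1α : β + 1 < α := by
          rw [Ordinal.add_one_eq_succ]; exact hlim.succ_lt hβα
        have hβ1ω : β + 1 < omega1 := hβ1α.trans hα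
        have hx : (x, y) ∈ G (β + 1) := hGanti α hα (β + 1) hβ1α.le h1
        have hy : (y, z) ∈ G (β + 1) := hGanti α hα (β + 1) hβ1α.le h2
        exact mem_iInter.1 ((hGsucc β hβ1ω).2 x y z hx hy).2 ⟨β, hself_succ β⟩
      rw [hGα]
      exact mem_iInter.2 fun β => hxz β.1 β.2
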